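/- The super domination number of the complete bipartite graph K_{n,m} equals n + m − 2. -/

import Mathlib

open SimpleGraph

/-- A super dominating set: a dominating set `S` such that every vertex `u ∉ S`
has a private "super" dominator `v ∈ S` with `N(v) ∩ (V \ S) = {u}`. -/
def IsSuperDominatingSet {V : Type*} (G : SimpleGraph V) (S : Finset V) : Prop :=
  (∀ u ∉ S, ∃ v ∈ S, G.Adj v u) ∧
  (∀ u ∉ S, ∃ v ∈ S, ∀ w, (G.Adj v w ∧ w ∉ S) ↔ w = u)

/-- The super domination number: minimum size of a super dominating set. -/
noncomputable def superDominationNumber {V : Type*} (G : SimpleGraph V) : ℕ :=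
  sInf {n | ∃ S : Finset V, IsSuperDominatingSet G S ∧ S.card = n}

/-- For the complete bipartite graph `K_{n,m}` (with `n, m ≥ 2`),
`γ_sp(K_{n,m}) = n + m - 2`. -/
theorem stmt4 (n m : ℕ) (hn : 2 ≤ n) (hm : 2 ≤ m) :
    superDominationNumber (completeBipartiteGraph (Fin n) (Fin m)) = n + m - 2 := by
  classical
  set G := completeBipartiteGraph (Fin n) (Fin m)
  have hcardV : Fintype.card (Fin n ⊕ Fin m) = n + m := by simp
  -- The witness set: everything except inl 0 and inr 0
  set a0 : Fin n ⊕ Fin m := Sum.inl ⟨0, by omega⟩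
  set b0 : Fin n ⊕ Fin m := Sum.inr ⟨0, by omega⟩
  set S : Finset (Fin n ⊕ Fin m) := Finset.univ \ {a0, b0} with hS
  have hmemS : ∀ w, w ∈ S ↔ w ≠ a0 ∧ w ≠ b0 := by
    intro w; simp [hS]
  have hSsuper : IsSuperDominatingSet G S := by
    constructor
    · intro u hu
      rw [hmemS] at hu
      push_neg at hu
      by_cases h : u = a0
      · refine ⟨Sum.inr ⟨1, by omega⟩, ?_, ?_⟩
        · rw [hmemS]; constructor <;> simp [a0, b0, Fin.ext_iff]
        · subst h; simp [G, a0]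
      · have h2 : u = b0 := by tauto
        refine ⟨Sum.inl ⟨1, by omega⟩, ?_, ?_⟩
        · rw [hmemS]; constructor <;> simp [a0, b0, Fin.ext_iff]
        · subst h2; simp [G, b0]
    · intro u hu
      rw [hmemS] at hu
      push_neg at hu
      by_cases h : u = a0
      · refine ⟨Sum.inr ⟨1, by omega⟩, ?_, ?_⟩
        · rw [hmemS]; constructor <;> simp [a0, b0, Fin.ext_iff]
        · intro w
          subst h
          rcases w with x | y
          · simp [hmemS, G, a0, b0]
          · simp [hmemS, G, a0, b0]
      · have h2 : u = b0 := by tauto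
        refine ⟨Sum.inl ⟨1, by omega⟩, ?_, ?_⟩
        · rw [hmemS]; constructor <;> simp [a0, b0, Fin.ext_iff]
        · intro w
          subst h2
          rcases w with x | y
          · simp [hmemS, G, a0, b0]
          · simp [hmemS, G, a0, b0]
  have hScard : S.card = n + m - 2 := by
    have hsub : ({a0, b0} : Finset (Fin n ⊕ Fin m)) ⊆ Finset.univ := Finset.subset_univ _
    have hpair : ({a0, b0} : Finset (Fin n ⊕ Fin m)).card = 2 := by
      rw [Finset.card_insert_of_notMem (by simp [a0, b0]), Finset.card_singleton]
    rw [hS, Finset.card_sdiff_of_subset hsub, hpair, Finset.card_univ, hcardV]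
  have hmem : n + m - 2 ∈ {k | ∃ S : Finset (Fin n ⊕ Fin m),
      IsSuperDominatingSet G S ∧ S.card = k} := ⟨S, hSsuper, hScard⟩
  apply le_antisymm
  · exact Nat.sInf_le hmem
  · refine le_csInf ⟨_, hmem⟩ ?_
    rintro k ⟨T, ⟨hdom, hsup⟩, rfl⟩
    -- The complement of T has at most 2 elements
    have hinj : Set.InjOn Sum.isLeft ((Tᶜ : Finset (Fin n ⊕ Fin m)) : Set (Fin n ⊕ Fin m)) := by
      intro u1 h1 u2 h2 heq
      simp only [Finset.coe_compl, Set.mem_compl_iff, Finset.mem_coe] at h1 h2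
      obtain ⟨v, hv, hiff⟩ := hsup u1 h1
      have hadj1 : G.Adj v u1 ∧ u1 ∉ T := (hiff u1).mpr rfl
      have hadj2 : G.Adj v u2 := by
        rcases v with x | y <;> rcases u1 with x1 | y1 <;> rcases u2 with x2 | y2 <;>
          simp [G] at hadj1 heq ⊢
      exact ((hiff u2).mp ⟨hadj2, h2⟩).symm
    have hcompl : (Tᶜ : Finset (Fin n ⊕ Fin m)).card ≤ 2 := by
      have := Finset.card_le_card_of_injOn (f := Sum.isLeft) (s := Tᶜ)
        (t := (Finset.univ : Finset Bool)) (fun _ _ => Finset.mem_univ _) hinj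
      simpa using this
    have := Finset.card_add_card_compl T
    rw [hcardV] at this
    omega
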